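/- Let T > 0 and let W_i : ℝ → Ω → ℝ, i ∈ ℕ, be jointly measurable stochastic processes on a probability space (Ω, P) that are independent and identically distributed as processes and satisfy 0 ≤ W_i(s, ω) ≤ 1 for all s, ω. For t ∈ [0, T] set X_i^t = ∫₀^t W_i(s) ds and Z_n(t) = n^{-1/2} ∑_{i=1}^n (X_i^t − E[X_i^t]) (each Z_n has Lipschitz, hence continuous, sample paths). Then the sequence (Z_n) is stochastically equicontinuous on [0, T]: for every ε > 0, lim_{δ→0} limsup_{n→∞} P( sup_{s,t ∈ [0,T], |t−s| ≤ δ} |Z_n(t) − Z_n(s)| > ε ) = 0. (Tightness part of Theorem A.) -/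

import Mathlib

open MeasureTheory ProbabilityTheory Filter Topology
open scoped ENNReal

/-- helper: a bounded measurable real function is interval integrable. -/
lemma aux_intervalIntegrable {f : ℝ → ℝ} (hf : Measurable f) {C : ℝ}
    (hC : ∀ u, |f u| ≤ C) (a b : ℝ) : IntervalIntegrable f volume a b := by
  rw [intervalIntegrable_iff]
  have hfin : volume (Set.uIoc a b) ≠ ⊤ := by
    rw [Set.uIoc]; exact measure_Ioc_lt_top.ne
  exact Measure.integrableOn_of_bounded hfin hf.aestronglyMeasurable
    (ae_of_all _ fun u => by simpa [Real.norm_eq_abs] using hC u)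

set_option maxHeartbeats 1000000 in
theorem stmt_1 {Ω : Type*} [MeasurableSpace Ω] (P : Measure Ω) [IsProbabilityMeasure P]
    (T : ℝ) (hT : 0 < T)
    (W : ℕ → ℝ → Ω → ℝ)
    (hmeas : ∀ i, Measurable (Function.uncurry (W i)))
    (hbdd : ∀ i s ω, W i s ω ∈ Set.Icc (0 : ℝ) 1)
    (hindep : iIndepFun (m := fun _ => (inferInstance : MeasurableSpace (ℝ → ℝ)))
      (fun i ω => fun s => W i s ω) P)
    (hident : ∀ i, IdentDistrib (fun ω => fun s => W i s ω) (fun ω => fun s => W 0 s ω) P P)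
    (X : ℕ → ℝ → Ω → ℝ)
    (hX : ∀ i t ω, X i t ω = ∫ s in (0 : ℝ)..t, W i s ω)
    (Z : ℕ → ℝ → Ω → ℝ)
    (hZ : ∀ n t ω, Z n t ω
      = (Real.sqrt n)⁻¹ * ∑ i ∈ Finset.range n, (X i t ω - ∫ ω', X i t ω' ∂P)) :
    ∀ ε > (0 : ℝ),
      Tendsto (fun δ : ℝ =>
          Filter.limsup (fun n =>
            P {ω | (⨆ (s : Set.Icc (0 : ℝ) T) (t : Set.Icc (0 : ℝ) T)
                (_ : |(t : ℝ) - (s : ℝ)| ≤ δ), |Z n t ω - Z n s ω|) > ε}) atTop)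
        (𝓝[>] 0) (𝓝 0) := by
  intro ε hε
  -- basic measurability / boundedness facts
  have hWabs : ∀ i u ω, |W i u ω| ≤ 1 := fun i u ω =>
    abs_le.2 ⟨by linarith [(hbdd i u ω).1], (hbdd i u ω).2⟩
  have hWm_u : ∀ i (ω : Ω), Measurable fun u => W i u ω := fun i ω =>
    (hmeas i).comp (measurable_id.prodMk measurable_const)
  have hWm_ω : ∀ i (u : ℝ), Measurable fun ω => W i u ω := fun i u =>
    (hmeas i).comp (measurable_const.prodMk measurable_id)
  have hWint_ω : ∀ i (u : ℝ), Integrable (fun ω => W i u ω) P := fun i u =>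
    (integrable_const (1 : ℝ)).mono' (hWm_ω i u).aestronglyMeasurable
      (ae_of_all _ fun ω => by simpa [Real.norm_eq_abs] using hWabs i u ω)
  -- the mean function
  set m : ℕ → ℝ → ℝ := fun i u => ∫ ω, W i u ω ∂P with hm_def
  have hm_meas : ∀ i, Measurable (m i) := by
    intro i
    exact (StronglyMeasurable.integral_prod_right'
      (ν := P) (f := Function.uncurry (W i)) (hmeas i).stronglyMeasurable).measurable
  have hm_nonneg : ∀ i u, 0 ≤ m i u := fun i u =>
    integral_nonneg fun ω => (hbdd i u ω).1
  have hm_le_one : ∀ i u, m i u ≤ 1 := by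
    intro i u
    calc ∫ ω, W i u ω ∂P ≤ ∫ _ω, (1 : ℝ) ∂P :=
          integral_mono (hWint_ω i u) (integrable_const 1) fun ω => (hbdd i u ω).2
      _ = 1 := by simp
  have hm_abs : ∀ i u, |m i u| ≤ 1 := fun i u =>
    abs_le.2 ⟨by linarith [hm_nonneg i u], hm_le_one i u⟩
  -- g n u ω
  set g : ℕ → ℝ → Ω → ℝ :=
    fun n u ω => (Real.sqrt n)⁻¹ * ∑ i ∈ Finset.range n, (W i u ω - m i u) with hg_def
  have hg_abs : ∀ n u ω, |g n u ω| ≤ (Real.sqrt n)⁻¹ * n := by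
    intro n u ω
    rw [hg_def, abs_mul, abs_of_nonneg (inv_nonneg.2 (Real.sqrt_nonneg _))]
    gcongr
    calc |∑ i ∈ Finset.range n, (W i u ω - m i u)|
        ≤ ∑ i ∈ Finset.range n, |W i u ω - m i u| := Finset.abs_sum_le_sum_abs _ _
      _ ≤ ∑ _i ∈ Finset.range n, (1 : ℝ) := by
          refine Finset.sum_le_sum fun i _ => ?_
          have h1 := hbdd i u ω
          have h2 := hm_nonneg i u
          have h3 := hm_le_one i u
          rw [abs_le]
          constructor <;> [linarith [h1.1]; linarith [h1.2]]
      _ = n := by simp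
  have hg_meas_u : ∀ n (ω : Ω), Measurable fun u => g n u ω := by
    intro n ω
    exact measurable_const.mul (Finset.measurable_sum _ fun i _ => (hWm_u i ω).sub (hm_meas i))
  have hgII : ∀ n (ω : Ω) a b, IntervalIntegrable (fun u => g n u ω) volume a b :=
    fun n ω a b => aux_intervalIntegrable (hg_meas_u n ω) (fun u => hg_abs n u ω) a b
  have hgsqII : ∀ n (ω : Ω) a b,
      IntervalIntegrable (fun u => (g n u ω) ^ 2) volume a b := by
    intro n ω a b
    refine aux_intervalIntegrable ((hg_meas_u n ω).pow_const 2)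
      (C := ((Real.sqrt n)⁻¹ * n) ^ 2) (fun u => ?_) a b
    rw [abs_pow]
    exact pow_le_pow_left₀ (abs_nonneg _) (hg_abs n u ω) 2
  -- Fubini for the mean of X
  have hXmean : ∀ i (t : ℝ), 0 ≤ t →
      ∫ ω, X i t ω ∂P = ∫ u in (0:ℝ)..t, m i u := by
    intro i t ht
    haveI : IsFiniteMeasure (volume.restrict (Set.Ioc (0:ℝ) t)) :=
      ⟨by rw [Measure.restrict_apply_univ]; exact measure_Ioc_lt_top⟩
    have hint : Integrable (Function.uncurry fun ω u => W i u ω)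
        (P.prod (volume.restrict (Set.Ioc (0:ℝ) t))) := by
      refine (integrable_const (1 : ℝ)).mono'
        (((hmeas i).comp measurable_swap).aestronglyMeasurable) ?_
      exact ae_of_all _ fun p => by
        simpa [Real.norm_eq_abs, Function.uncurry] using hWabs i p.2 p.1
    calc ∫ ω, X i t ω ∂P
        = ∫ ω, (∫ u in Set.Ioc (0:ℝ) t, W i u ω) ∂P := by
          congr 1; funext ω; rw [hX, intervalIntegral.integral_of_le ht]
      _ = ∫ u in Set.Ioc (0:ℝ) t, ∫ ω, W i u ω ∂P := integral_integral_swap hint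
      _ = ∫ u in (0:ℝ)..t, m i u := (intervalIntegral.integral_of_le ht).symm
  -- increment representation
  have hZdiff : ∀ n (ω : Ω) (s t : ℝ), 0 ≤ s → 0 ≤ t →
      Z n t ω - Z n s ω = ∫ u in s..t, g n u ω := by
    intro n ω s t hs ht
    have hWII : ∀ (i : ℕ) a b, IntervalIntegrable (fun u => W i u ω) volume a b :=
      fun i a b => aux_intervalIntegrable (hWm_u i ω) (fun u => hWabs i u ω) a b
    have hmII : ∀ (i : ℕ) a b, IntervalIntegrable (m i) volume a b :=
      fun i a b => aux_intervalIntegrable (hm_meas i) (hm_abs i) a b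
    have key : ∀ i, (X i t ω - ∫ ω', X i t ω' ∂P) - (X i s ω - ∫ ω', X i s ω' ∂P)
        = ∫ u in s..t, (W i u ω - m i u) := by
      intro i
      rw [hX, hX, hXmean i t ht, hXmean i s hs,
        intervalIntegral.integral_sub (hWII i s t) (hmII i s t),
        ← intervalIntegral.integral_interval_sub_left (hWII i 0 t) (hWII i 0 s),
        ← intervalIntegral.integral_interval_sub_left (hmII i 0 t) (hmII i 0 s)]
      ring
    rw [hZ, hZ, ← mul_sub, ← Finset.sum_sub_distrib]
    simp_rw [key]
    rw [← intervalIntegral.integral_finset_sum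
      (fun i _ => (hWII i s t).sub (hmII i s t)),
      ← intervalIntegral.integral_const_mul]
  -- the quadratic functional Y
  set Y : ℕ → Ω → ℝ := fun n ω => ∫ u in (0:ℝ)..T, (g n u ω) ^ 2 with hY_def
  have hY_nonneg : ∀ n ω, 0 ≤ Y n ω := fun n ω =>
    intervalIntegral.integral_nonneg hT.le fun u _ => sq_nonneg _
  have hY_le : ∀ n ω, Y n ω ≤ ((Real.sqrt n)⁻¹ * n) ^ 2 * T := by
    intro n ω
    calc Y n ω ≤ ∫ _u in (0:ℝ)..T, ((Real.sqrt n)⁻¹ * n) ^ 2 := by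
          refine intervalIntegral.integral_mono_on hT.le (hgsqII n ω 0 T)
            intervalIntegrable_const fun u _ => ?_
          rw [← sq_abs]
          exact pow_le_pow_left₀ (abs_nonneg _) (hg_abs n u ω) 2
      _ = ((Real.sqrt n)⁻¹ * n) ^ 2 * T := by
          rw [intervalIntegral.integral_const]; rw [smul_eq_mul]; ring
  -- joint measurability of g squared
  have hg_joint : ∀ n, Measurable fun p : Ω × ℝ => (g n p.2 p.1) ^ 2 := by
    intro n
    refine Measurable.pow_const ?_ 2
    exact measurable_const.mul (Finset.measurable_sum _ fun i _ =>
      (((hmeas i).comp measurable_swap).sub ((hm_meas i).comp measurable_snd)))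
  haveI : IsFiniteMeasure (volume.restrict (Set.Ioc (0:ℝ) T)) :=
    ⟨by rw [Measure.restrict_apply_univ]; exact measure_Ioc_lt_top⟩
  have hY_eq : ∀ n ω, Y n ω = ∫ u in Set.Ioc (0:ℝ) T, (g n u ω) ^ 2 := by
    intro n ω; rw [hY_def]; exact intervalIntegral.integral_of_le hT.le
  have hY_meas : ∀ n, StronglyMeasurable (Y n) := by
    intro n
    have := (hg_joint n).stronglyMeasurable.integral_prod_right'
      (ν := volume.restrict (Set.Ioc (0:ℝ) T))
    have h2 : (fun x : Ω => ∫ y in Set.Ioc (0:ℝ) T, (g n (x, y).2 (x, y).1) ^ 2) = Y n := by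
      funext ω; rw [hY_eq]
    exact h2 ▸ this
  have hY_int : ∀ n, Integrable (Y n) P := by
    intro n
    refine (integrable_const (((Real.sqrt n)⁻¹ * n) ^ 2 * T)).mono'
      (hY_meas n).aestronglyMeasurable (ae_of_all _ fun ω => ?_)
    rw [Real.norm_eq_abs, abs_of_nonneg (hY_nonneg n ω)]
    exact hY_le n ω
  -- variance bound: for each u, E[g(u)^2] ≤ 1
  have hWL2 : ∀ i (u : ℝ), MemLp (fun ω => W i u ω) 2 P := by
    intro i u
    exact MemLp.of_bound (hWm_ω i u).aestronglyMeasurable 1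
      (ae_of_all _ fun ω => by simpa [Real.norm_eq_abs] using hWabs i u ω)
  have hvar : ∀ n (u : ℝ), ∫ ω, (g n u ω) ^ 2 ∂P ≤ 1 := by
    intro n u
    rcases Nat.eq_zero_or_pos n with hn | hn
    · subst hn; simp [hg_def]
    have hindep_u : iIndepFun (m := fun _ => (inferInstance : MeasurableSpace ℝ))
        (fun i ω => W i u ω) P :=
      hindep.comp (fun _ φ => φ u) (fun _ => measurable_pi_apply u)
    set S : Ω → ℝ := fun ω => ∑ i ∈ Finset.range n, W i u ω with hS_def
    have hSL2 : MemLp S 2 P := by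
      have : S = ∑ i ∈ Finset.range n, fun ω => W i u ω := by
        funext ω; rw [hS_def]; simp
      rw [this]
      exact memLp_finset_sum' _ fun i _ => hWL2 i u
    have hgS : ∀ ω, g n u ω = (Real.sqrt n)⁻¹ * (S ω - ∫ ω', S ω' ∂P) := by
      intro ω
      rw [hg_def, hS_def]
      simp only
      rw [integral_finset_sum _ fun i _ => hWint_ω i u, Finset.sum_sub_distrib]
    have hvarS : variance S P ≤ n := by
      have hsum : variance S P = ∑ i ∈ Finset.range n, variance (fun ω => W i u ω) P := by
        have : S = ∑ i ∈ Finset.range n, fun ω => W i u ω := by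
          funext ω; rw [hS_def]; simp
        rw [this]
        refine IndepFun.variance_sum (fun i _ => hWL2 i u) ?_
        intro i _ j _ hij
        exact hindep_u.indepFun hij
      rw [hsum]
      calc ∑ i ∈ Finset.range n, variance (fun ω => W i u ω) P
          ≤ ∑ _i ∈ Finset.range n, (1:ℝ) := by
            refine Finset.sum_le_sum fun i _ => ?_
            calc variance (fun ω => W i u ω) P
                ≤ ∫ ω, (fun ω => W i u ω) ω ^ 2 ∂P :=
                  variance_le_expectation_sq (hWm_ω i u).aestronglyMeasurable
              _ ≤ ∫ _ω, (1:ℝ) ∂P := by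
                  refine integral_mono ((hWL2 i u).integrable_sq) (integrable_const 1)
                    fun ω => ?_
                  have h1 := hbdd i u ω
                  nlinarith [h1.1, h1.2]
              _ = 1 := by simp
        _ = n := by simp
    have hSvar_eq : ∫ ω, (S ω - ∫ ω', S ω' ∂P) ^ 2 ∂P = variance S P := by
      rw [variance_eq_integral hSL2.aestronglyMeasurable.aemeasurable]
    calc ∫ ω, (g n u ω) ^ 2 ∂P
        = ∫ ω, ((Real.sqrt n)⁻¹) ^ 2 * (S ω - ∫ ω', S ω' ∂P) ^ 2 ∂P := by
          congr 1; funext ω; rw [hgS ω]; ring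
      _ = ((Real.sqrt n)⁻¹) ^ 2 * ∫ ω, (S ω - ∫ ω', S ω' ∂P) ^ 2 ∂P :=
          integral_const_mul _ _
      _ ≤ ((Real.sqrt n)⁻¹) ^ 2 * n := by
          rw [hSvar_eq]
          refine mul_le_mul_of_nonneg_left hvarS (by positivity)
      _ = 1 := by
          rw [← Real.sqrt_inv, Real.sq_sqrt (by positivity)]
          field_simp
  -- Fubini: E[Y n] ≤ T
  have hYmean : ∀ n, ∫ ω, Y n ω ∂P ≤ T := by
    intro n
    have hint : Integrable (Function.uncurry fun ω u => (g n u ω) ^ 2)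
        (P.prod (volume.restrict (Set.Ioc (0:ℝ) T))) := by
      refine (integrable_const (((Real.sqrt n)⁻¹ * n) ^ 2)).mono'
        (hg_joint n).aestronglyMeasurable (ae_of_all _ fun p => ?_)
      rw [Function.uncurry, Real.norm_eq_abs, abs_pow]
      exact pow_le_pow_left₀ (abs_nonneg _) (hg_abs n p.2 p.1) 2
    have hswap : ∫ ω, Y n ω ∂P = ∫ u in Set.Ioc (0:ℝ) T, (∫ ω, (g n u ω) ^ 2 ∂P) := by
      calc ∫ ω, Y n ω ∂P
          = ∫ ω, (∫ u in Set.Ioc (0:ℝ) T, (g n u ω) ^ 2) ∂P := by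
            congr 1; funext ω; exact hY_eq n ω
        _ = _ := integral_integral_swap hint
    rw [hswap]
    have hmi : IntegrableOn (fun u => ∫ ω, (g n u ω) ^ 2 ∂P) (Set.Ioc (0:ℝ) T) volume := by
      have hsm : StronglyMeasurable (fun u : ℝ => ∫ ω, (g n u ω) ^ 2 ∂P) := by
        have h0 : Measurable fun p : ℝ × Ω => (g n p.1 p.2) ^ 2 :=
          (hg_joint n).comp measurable_swap
        exact h0.stronglyMeasurable.integral_prod_right' (ν := P)
      refine Measure.integrableOn_of_bounded (M := 1) measure_Ioc_lt_top.ne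
        hsm.aestronglyMeasurable (ae_of_all _ fun u => ?_)
      rw [Real.norm_eq_abs, abs_of_nonneg (integral_nonneg fun ω => sq_nonneg _)]
      exact hvar n u
    calc ∫ u in Set.Ioc (0:ℝ) T, (∫ ω, (g n u ω) ^ 2 ∂P)
        ≤ ∫ _u in Set.Ioc (0:ℝ) T, (1:ℝ) := integral_mono hmi (integrable_const 1)
          fun u => hvar n u
      _ = T := by
          rw [setIntegral_const, smul_eq_mul, mul_one, Measure.real, Real.volume_Ioc,
            ENNReal.toReal_ofReal (by linarith)]
          exact sub_zero T
  -- key pointwise bound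
  have hkey : ∀ δ : ℝ, 0 < δ → ∀ n (ω : Ω) (s t : ℝ), s ∈ Set.Icc (0:ℝ) T →
      t ∈ Set.Icc (0:ℝ) T → |t - s| ≤ δ →
      |Z n t ω - Z n s ω| ≤ Real.sqrt δ / 2 * (1 + Y n ω) := by
    intro δ hδ n ω
    have hsd : 0 < Real.sqrt δ := Real.sqrt_pos.2 hδ
    have haux : ∀ s t : ℝ, s ∈ Set.Icc (0:ℝ) T → t ∈ Set.Icc (0:ℝ) T → s ≤ t →
        t - s ≤ δ → |Z n t ω - Z n s ω| ≤ Real.sqrt δ / 2 * (1 + Y n ω) := by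
      intro s t hs ht hst hd
      have hptw : ∀ u : ℝ, |g n u ω| ≤ (Real.sqrt δ)⁻¹ / 2 + Real.sqrt δ / 2 * (g n u ω) ^ 2 := by
        intro u
        have h0 := sq_nonneg (Real.sqrt δ * |g n u ω| - 1)
        have h1 : Real.sqrt δ * Real.sqrt δ = δ := Real.mul_self_sqrt hδ.le
        have h2 : (Real.sqrt δ)⁻¹ * Real.sqrt δ = 1 := inv_mul_cancel₀ hsd.ne'
        have h3 : |g n u ω| ^ 2 = (g n u ω) ^ 2 := sq_abs _
        nlinarith [abs_nonneg (g n u ω)]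
      have hII1 : IntervalIntegrable (fun u => |g n u ω|) volume s t := (hgII n ω s t).abs
      have hII2 : IntervalIntegrable
          (fun u => (Real.sqrt δ)⁻¹ / 2 + Real.sqrt δ / 2 * (g n u ω) ^ 2) volume s t :=
        intervalIntegrable_const.add ((hgsqII n ω s t).const_mul _)
      calc |Z n t ω - Z n s ω| = |∫ u in s..t, g n u ω| := by
            rw [hZdiff n ω s t hs.1 ht.1]
        _ ≤ ∫ u in s..t, |g n u ω| :=
            intervalIntegral.abs_integral_le_integral_abs hst
        _ ≤ ∫ u in s..t, ((Real.sqrt δ)⁻¹ / 2 + Real.sqrt δ / 2 * (g n u ω) ^ 2) :=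
            intervalIntegral.integral_mono_on hst hII1 hII2 fun u _ => hptw u
        _ = (Real.sqrt δ)⁻¹ / 2 * (t - s)
              + Real.sqrt δ / 2 * ∫ u in s..t, (g n u ω) ^ 2 := by
            rw [intervalIntegral.integral_add intervalIntegrable_const
              ((hgsqII n ω s t).const_mul _),
              intervalIntegral.integral_const, intervalIntegral.integral_const_mul,
              smul_eq_mul]
            ring
        _ ≤ (Real.sqrt δ)⁻¹ / 2 * δ + Real.sqrt δ / 2 * Y n ω := by
            have hsub : ∫ u in s..t, (g n u ω) ^ 2 ≤ Y n ω := by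
              rw [hY_def]
              exact intervalIntegral.integral_mono_interval hs.1 hst ht.2
                (ae_of_all _ fun u => sq_nonneg _) (hgsqII n ω 0 T)
            have h2 := mul_le_mul_of_nonneg_left hsub (by positivity : (0:ℝ) ≤ Real.sqrt δ / 2)
            have h3 : (Real.sqrt δ)⁻¹ / 2 * (t - s) ≤ (Real.sqrt δ)⁻¹ / 2 * δ :=
              mul_le_mul_of_nonneg_left hd (by positivity)
            linarith
        _ = Real.sqrt δ / 2 * (1 + Y n ω) := by
            have h1 : (Real.sqrt δ)⁻¹ / 2 * δ = Real.sqrt δ / 2 := by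
              have hh := Real.mul_self_sqrt hδ.le
              field_simp
              nlinarith [hh]
            rw [h1]; ring
    intro s t hs ht hd
    rcases le_total s t with h | h
    · exact haux s t hs ht h (le_trans (le_abs_self _) hd)
    · rw [abs_sub_comm] at hd ⊢
      exact haux t s ht hs h (le_trans (le_abs_self _) hd)
  -- final assembly
  have hBtend : Tendsto (fun δ : ℝ => ENNReal.ofReal (T / (2*ε/Real.sqrt δ - 1)))
      (𝓝[>] 0) (𝓝 0) := by
    have h1 : Tendsto Real.sqrt (𝓝[>] (0:ℝ)) (𝓝[>] (0:ℝ)) := by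
      apply tendsto_nhdsWithin_of_tendsto_nhds_of_eventually_within
      · have h0 := Real.continuous_sqrt.tendsto 0
        rw [Real.sqrt_zero] at h0
        exact h0.mono_left nhdsWithin_le_nhds
      · exact eventually_nhdsWithin_of_forall fun x hx => Real.sqrt_pos.2 hx
    have h2 : Tendsto (fun y : ℝ => 2*ε/y - 1) (𝓝[>] (0:ℝ)) atTop := by
      have hdiv : Tendsto (fun y : ℝ => 2*ε/y) (𝓝[>] (0:ℝ)) atTop := by
        simp only [div_eq_mul_inv]
        exact tendsto_inv_nhdsGT_zero.const_mul_atTop (by positivity)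
      simpa [sub_eq_add_neg] using tendsto_atTop_add_const_right (𝓝[>] (0:ℝ)) (-1) hdiv
    have h3 : Tendsto (fun δ : ℝ => 2*ε/Real.sqrt δ - 1) (𝓝[>] 0) atTop := h2.comp h1
    have h4 : Tendsto (fun δ : ℝ => T / (2*ε/Real.sqrt δ - 1)) (𝓝[>] 0) (𝓝 0) :=
      Tendsto.div_atTop tendsto_const_nhds h3
    have h5 := (ENNReal.continuous_ofReal.tendsto 0).comp h4
    simpa [Function.comp_def] using h5
  refine tendsto_of_tendsto_of_tendsto_of_le_of_le'
    (tendsto_const_nhds : Tendsto (fun _ : ℝ => (0:ℝ≥0∞)) (𝓝[>] (0:ℝ)) (𝓝 0)) hBtend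
    (Eventually.of_forall fun δ => zero_le) ?_
  filter_upwards [Ioo_mem_nhdsGT (show (0:ℝ) < ε^2 by positivity)] with δ hδ
  have hδ0 : 0 < δ := hδ.1
  have hsd : 0 < Real.sqrt δ := Real.sqrt_pos.2 hδ0
  have hsd_lt : Real.sqrt δ < ε := by
    have h1 : Real.sqrt δ < Real.sqrt (ε^2) := Real.sqrt_lt_sqrt hδ0.le hδ.2
    rwa [Real.sqrt_sq hε.le] at h1
  set c : ℝ := 2*ε/Real.sqrt δ - 1 with hc_def
  have hc1 : 1 < c := by
    have h2 : 2 < 2*ε/Real.sqrt δ := by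
      rw [lt_div_iff₀ hsd]; nlinarith
    rw [hc_def]; linarith
  have hc0 : 0 < c := by linarith
  refine Filter.limsup_le_of_le (by isBoundedDefault) (Eventually.of_forall fun n => ?_)
  have hincl : {ω | (⨆ (s : Set.Icc (0:ℝ) T) (t : Set.Icc (0:ℝ) T)
      (_ : |(t : ℝ) - (s : ℝ)| ≤ δ), |Z n t ω - Z n s ω|) > ε} ⊆ {ω | c ≤ Y n ω} := by
    intro ω hω
    simp only [Set.mem_setOf_eq] at hω ⊢
    have hB : (0:ℝ) ≤ Real.sqrt δ / 2 * (1 + Y n ω) :=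
      mul_nonneg (by positivity) (by linarith [hY_nonneg n ω])
    have hsup : (⨆ (s : Set.Icc (0:ℝ) T) (t : Set.Icc (0:ℝ) T)
        (_ : |(t : ℝ) - (s : ℝ)| ≤ δ), |Z n t ω - Z n s ω|)
        ≤ Real.sqrt δ / 2 * (1 + Y n ω) := by
      refine Real.iSup_le (fun s => ?_) hB
      refine Real.iSup_le (fun t => ?_) hB
      refine Real.iSup_le (fun hts => ?_) hB
      exact hkey δ hδ0 n ω s t s.2 t.2 hts
    have h5 : ε < Real.sqrt δ / 2 * (1 + Y n ω) := lt_of_lt_of_le hω hsup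
    have h6 : 2*ε/Real.sqrt δ < 1 + Y n ω := by
      rw [div_lt_iff₀ hsd]; nlinarith
    rw [hc_def]; linarith
  refine le_trans (measure_mono hincl) ?_
  have h1 := mul_meas_ge_le_integral_of_nonneg
    (ae_of_all P fun ω => hY_nonneg n ω) (hY_int n) c
  have h2 : (P {ω | c ≤ Y n ω}).toReal ≤ T / c := by
    rw [le_div_iff₀ hc0, mul_comm]
    exact le_trans h1 (hYmean n)
  calc P {ω | c ≤ Y n ω}
      = ENNReal.ofReal ((P {ω | c ≤ Y n ω}).toReal) :=
        (ENNReal.ofReal_toReal (measure_ne_top P _)).symm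
    _ ≤ ENNReal.ofReal (T / c) := ENNReal.ofReal_le_ofReal h2
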